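/- arXiv:1711.02411 — 2 statements merged into one kernel-verified Lean document; each statement's English description precedes it below -/
import Mathlib

section
/- Let F = Inj_1(n,k) be the set of injective functions from [n] to [k], with whirl maps w_i (repeatedly adding 1 mod k at position i until injective) and w = w_n ∘ ⋯ ∘ w_1. Then for every w-orbit O and every j ∈ [k], the average over f in O of #{i ∈ [n] : f(i) = j} equals n/k. -/
open Finset

open scoped Classical

open Fin.NatCast

noncomputable def whirl {n k : ℕ} [NeZero k] (F : Set (Fin n → Fin k)) (i : Fin n)
    (f : Fin n → Fin k) : Fin n → Fin k :=
  if h : ∃ t : ℕ, 0 < t ∧ Function.update f i (f i + (t : Fin k)) ∈ F then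
    Function.update f i (f i + ((Nat.find h : ℕ) : Fin k))
  else f

noncomputable def whirlAll {n k : ℕ} [NeZero k] (F : Set (Fin n → Fin k))
    (f : Fin n → Fin k) : Fin n → Fin k :=
  (List.finRange n).foldl (fun g i => whirl F i g) f

noncomputable def orbitOf {α : Type*} [Fintype α] [DecidableEq α] (w : α → α) (f : α) :
    Finset α :=
  Finset.univ.filter fun g => ∃ m : ℕ, w^[m] f = g

def Fs (n k : ℕ) : Set (Fin n → Fin k) := {h | Function.Injective h}

section Basics
variable {n k : ℕ} [NeZero k]

lemma update_inj_iff {g : Fin n → Fin k} (hg : Function.Injective g) (i : Fin n) (v : Fin k) :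
    Function.Injective (Function.update g i v) ↔ ∀ u, u ≠ i → g u ≠ v := by
  constructor
  · intro h u hu hgu
    have h1 : Function.update g i v u = v := by rw [Function.update_of_ne hu]; exact hgu
    have h2 : Function.update g i v i = v := by simp
    exact hu (h (h1.trans h2.symm))
  · intro h x y hxy
    by_cases hx : x = i <;> by_cases hy : y = i
    · rw [hx, hy]
    · subst hx; rw [Function.update_self, Function.update_of_ne hy] at hxy
      exact absurd hxy.symm (h y hy)
    · subst hy; rw [Function.update_of_ne hx, Function.update_self] at hxy
      exact absurd hxy (h x hx)
    · rw [Function.update_of_ne hx, Function.update_of_ne hy] at hxy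
      exact hg hxy

lemma whirl_apply_ne (F : Set (Fin n → Fin k)) (i : Fin n) (g : Fin n → Fin k) {u : Fin n}
    (hu : u ≠ i) : whirl F i g u = g u := by
  unfold whirl; split
  · rw [Function.update_of_ne hu]
  · rfl

lemma whirl_mem {F : Set (Fin n → Fin k)} {g : Fin n → Fin k} (hg : g ∈ F) (i : Fin n) :
    whirl F i g ∈ F := by
  unfold whirl; split
  · next h => exact (Nat.find_spec h).2
  · exact hg

lemma val_sub (x y : Fin k) : (x - y).val = (k - y.val + x.val) % k := by
  rw [Fin.sub_def]

end Basics
section Spec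
variable {n k : ℕ} [NeZero k]

lemma whirl_spec (hnk : n < k) {g : Fin n → Fin k} (hg : Function.Injective g) (i : Fin n) :
    ∃ T : ℕ, 0 < T ∧ T < k ∧
      whirl (Fs n k) i g = Function.update g i (g i + (T : Fin k)) ∧
      Function.Injective (Function.update g i (g i + (T : Fin k))) ∧
      (∀ s : ℕ, 0 < s → s < T → ∃ u, u ≠ i ∧ g u = g i + (s : Fin k)) := by
  have hns : ¬ Function.Surjective g := by
    intro hs
    have := Fintype.card_le_of_surjective g hs
    simp only [Fintype.card_fin] at this
    omega
  simp only [Function.Surjective, not_forall, not_exists] at hns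
  obtain ⟨c, hc⟩ := hns
  have hcne : c ≠ g i := fun h => hc i h.symm
  have hex : ∃ t : ℕ, 0 < t ∧ Function.update g i (g i + (t : Fin k)) ∈ Fs n k := by
    refine ⟨(c - g i).val, ?_, ?_⟩
    · rcases Nat.eq_zero_or_pos (c - g i).val with h0 | h0
      · exact absurd (sub_eq_zero.mp (Fin.ext h0)) hcne
      · exact h0
    · have : g i + (((c - g i).val : ℕ) : Fin k) = c := by
        rw [Fin.cast_val_eq_self]; exact add_sub_cancel _ _
      rw [this]
      exact (update_inj_iff hg i c).mpr (fun u _ h => hc u h)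
  refine ⟨Nat.find hex, (Nat.find_spec hex).1, ?_, ?_, (Nat.find_spec hex).2, ?_⟩
  · calc Nat.find hex ≤ (c - g i).val := Nat.find_min' hex (by
        refine ⟨?_, ?_⟩
        · rcases Nat.eq_zero_or_pos (c - g i).val with h0 | h0
          · exact absurd (sub_eq_zero.mp (Fin.ext h0)) hcne
          · exact h0
        · have : g i + (((c - g i).val : ℕ) : Fin k) = c := by
            rw [Fin.cast_val_eq_self]; exact add_sub_cancel _ _
          rw [this]
          exact (update_inj_iff hg i c).mpr (fun u _ h => hc u h))
      _ < k := (c - g i).isLt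
  · rw [whirl, dif_pos hex]
  · intro s hs hsT
    have hmin := Nat.find_min hex hsT
    rw [not_and] at hmin
    have : ¬ Function.Injective (Function.update g i (g i + (s : Fin k))) := hmin hs
    rw [update_inj_iff hg i] at this
    push_neg at this
    obtain ⟨u, hu1, hu2⟩ := this
    exact ⟨u, hu1, hu2⟩

end Spec
section Steps
variable {n k : ℕ} [NeZero k]

noncomputable def steps (F : Set (Fin n → Fin k)) (g : Fin n → Fin k) (m : ℕ) :
    Fin n → Fin k :=
  ((List.finRange n).take m).foldl (fun g i => whirl F i g) g

lemma foldl_mem {F : Set (Fin n → Fin k)} (l : List (Fin n)) {g} (hg : g ∈ F) :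
    l.foldl (fun g i => whirl F i g) g ∈ F := by
  induction l generalizing g with
  | nil => exact hg
  | cons a l ih => exact ih (whirl_mem hg a)

lemma steps_mem {F : Set (Fin n → Fin k)} {g} (hg : g ∈ F) (m : ℕ) :
    steps F g m ∈ F := foldl_mem _ hg

lemma whirlAll_mem {F : Set (Fin n → Fin k)} {g} (hg : g ∈ F) : whirlAll F g ∈ F :=
  foldl_mem _ hg

lemma steps_length (F : Set (Fin n → Fin k)) (g) : steps F g n = whirlAll F g := by
  rw [steps, whirlAll, List.take_of_length_le (by simp)]

lemma steps_succ (F : Set (Fin n → Fin k)) (g) {m : ℕ} (hm : m < n) :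
    steps F g (m+1) = whirl F ⟨m, hm⟩ (steps F g m) := by
  have h1 : (List.finRange n)[m]? = some ⟨m, hm⟩ := by
    simp [List.getElem?_eq_getElem, hm]
  rw [steps, steps, List.take_succ, h1, List.foldl_append]
  rfl

lemma steps_apply_ge (F : Set (Fin n → Fin k)) (g) {m : ℕ} {u : Fin n} (hu : m ≤ u.val) :
    steps F g m u = g u := by
  induction m with
  | zero => rfl
  | succ m ih =>
    have hm : m < n := by have := u.isLt; omega
    rw [steps_succ F g hm, whirl_apply_ne _ _ _ (by
      intro h
      have : u.val = m := by rw [h]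
      omega)]
    exact ih (by omega)

lemma steps_add_apply (F : Set (Fin n → Fin k)) (g) {m : ℕ} {u : Fin n} (hu : u.val < m) :
    ∀ d, m + d ≤ n → steps F g (m + d) u = steps F g m u := by
  intro d
  induction d with
  | zero => intro _; rfl
  | succ d ih =>
    intro hdn
    have hmn : m + d < n := by omega
    rw [show m + (d+1) = (m+d)+1 from rfl, steps_succ F g hmn,
      whirl_apply_ne _ _ _ (by
        intro h
        have : u.val = m + d := by rw [h]
        omega)]
    exact ih (by omega)

lemma steps_apply_lt (F : Set (Fin n → Fin k)) (g) {m : ℕ} {u : Fin n} (hu : u.val < m)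
    (hm : m ≤ n) : steps F g m u = whirlAll F g u := by
  rw [← steps_length]
  have := steps_add_apply F g hu (n - m) (by omega)
  rw [show m + (n - m) = n from by omega] at this
  exact this.symm

noncomputable def mixN (F : Set (Fin n → Fin k)) (g : Fin n → Fin k) (t : ℕ) :
    Fin n → Fin k :=
  fun u => if u.val < t then whirlAll F g u else g u

lemma mixN_lt {F : Set (Fin n → Fin k)} {g t} {u : Fin n} (h : u.val < t) :
    mixN F g t u = whirlAll F g u := if_pos h

lemma mixN_ge {F : Set (Fin n → Fin k)} {g t} {u : Fin n} (h : t ≤ u.val) :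
    mixN F g t u = g u := if_neg (by omega)

lemma steps_eq_mixN (F : Set (Fin n → Fin k)) (g) {t} (ht : t ≤ n) :
    steps F g t = mixN F g t := by
  funext u
  rcases lt_or_ge u.val t with h | h
  · rw [mixN_lt h, steps_apply_lt F g h ht]
  · rw [mixN_ge h, steps_apply_ge F g h]

lemma mixN_inj {g : Fin n → Fin k} (hg : g ∈ Fs n k) {t} (ht : t ≤ n) :
    Function.Injective (mixN (Fs n k) g t) := by
  rw [← steps_eq_mixN _ _ ht]
  exact steps_mem hg t

lemma move_spec (hnk : n < k) {g : Fin n → Fin k} (hg : Function.Injective g) (i : Fin n) :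
    ∃ T : ℕ, 0 < T ∧ T < k ∧ whirlAll (Fs n k) g i = g i + (T : Fin k) ∧
      ∀ s : ℕ, 0 < s → s < T → ∃ u, u ≠ i ∧ mixN (Fs n k) g i.val u = g i + (s : Fin k) := by
  have hgF : g ∈ Fs n k := hg
  have hm : Function.Injective (steps (Fs n k) g i.val) := steps_mem hgF i.val
  obtain ⟨T, hT0, hTk, hwhirl, hinj, hmin⟩ := whirl_spec hnk hm i
  have hhi : steps (Fs n k) g i.val i = g i := steps_apply_ge _ _ (le_refl i.val)
  refine ⟨T, hT0, hTk, ?_, ?_⟩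
  · have h1 : steps (Fs n k) g (i.val + 1) i = whirlAll (Fs n k) g i :=
      steps_apply_lt _ _ (Nat.lt_succ_self _) i.isLt
    rw [← h1, steps_succ _ _ i.isLt, Fin.eta, hwhirl, Function.update_self, hhi]
  · intro s hs hsT
    obtain ⟨u, hu1, hu2⟩ := hmin s hs hsT
    refine ⟨u, hu1, ?_⟩
    rw [← steps_eq_mixN _ _ (le_of_lt i.isLt), hu2, hhi]

end Steps
section Keys
variable {n k : ℕ} [NeZero k]

lemma sub_val_cases (x y : Fin k) :
    (x - y).val = if y.val ≤ x.val then x.val - y.val else k - y.val + x.val := by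
  rw [val_sub]
  have hx := x.isLt; have hy := y.isLt
  rcases le_or_gt y.val x.val with h | h
  · rw [if_pos h]
    have he : k - y.val + x.val = k + (x.val - y.val) := by omega
    rw [he, Nat.add_mod_left, Nat.mod_eq_of_lt (by omega)]
  · rw [if_neg (by omega), Nat.mod_eq_of_lt (by omega)]

lemma move_ne (hnk : n < k) {g : Fin n → Fin k} (hg : Function.Injective g) (i : Fin n) :
    whirlAll (Fs n k) g i ≠ g i := by
  obtain ⟨T, hT0, hTk, hb, -⟩ := move_spec hnk hg i
  rw [hb]
  intro h
  have h0 : (T : Fin k) = 0 := add_eq_left.mp h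
  have := congrArg Fin.val h0
  rw [Fin.val_cast_of_lt hTk] at this
  simp only [Fin.val_zero] at this
  omega

lemma occupied (hnk : n < k) {g : Fin n → Fin k} (hg : Function.Injective g) (i : Fin n)
    {v : Fin k} (hva : v ≠ g i)
    (hlt : (v - g i).val < (whirlAll (Fs n k) g i - g i).val) :
    ∃ u, u ≠ i ∧ mixN (Fs n k) g i.val u = v := by
  obtain ⟨T, hT0, hTk, hb, hmin⟩ := move_spec hnk hg i
  have hTb : whirlAll (Fs n k) g i - g i = (T : Fin k) := by
    rw [hb]; exact add_sub_cancel_left _ _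
  have hs0 : 0 < (v - g i).val :=
    Nat.pos_of_ne_zero (fun h0 => (sub_ne_zero.mpr hva) (Fin.ext h0))
  have hsT : (v - g i).val < T := by
    rw [hTb, Fin.val_cast_of_lt hTk] at hlt; exact hlt
  obtain ⟨u, hu1, hu2⟩ := hmin _ hs0 hsT
  refine ⟨u, hu1, ?_⟩
  rw [hu2, Fin.cast_val_eq_self, add_sub_cancel]

lemma val_one_of (hk : 2 ≤ k) : (1 : Fin k).val = 1 := by
  rw [← Nat.cast_one, Fin.val_cast_of_lt (by omega)]

lemma val_sub_one {x : Fin k} (hk : 2 ≤ k) (hx : x ≠ 0) : (x - 1).val = x.val - 1 := by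
  have hxv : 0 < x.val := Nat.pos_of_ne_zero (fun h0 => hx (Fin.ext h0))
  have hxk := x.isLt
  rw [val_sub, val_one_of hk]
  have he : k - 1 + x.val = k + (x.val - 1) := by omega
  rw [he, Nat.add_mod_left, Nat.mod_eq_of_lt (by omega)]

lemma key_Q (hnk : n < k) {g : Fin n → Fin k} (hg : Function.Injective g) (i : Fin n)
    {v : Fin k} (hb : whirlAll (Fs n k) g i = v + 1) (ha : g i ≠ v) :
    ∃ u, u ≠ i ∧ mixN (Fs n k) g i.val u = v := by
  have hk2 : 2 ≤ k := by have := i.pos; omega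
  have hba : whirlAll (Fs n k) g i ≠ g i := move_ne hnk hg i
  have hx0 : whirlAll (Fs n k) g i - g i ≠ 0 := sub_ne_zero.mpr hba
  have hxv : 0 < (whirlAll (Fs n k) g i - g i).val :=
    Nat.pos_of_ne_zero (fun h0 => hx0 (Fin.ext h0))
  apply occupied hnk hg i (Ne.symm ha)
  have hrw : v - g i = (whirlAll (Fs n k) g i - g i) - 1 := by rw [hb]; abel
  rw [hrw, val_sub_one hk2 hx0]
  omega

lemma key_P (hnk : n < k) {g : Fin n → Fin k} (hg : Function.Injective g) (i : Fin n)
    {v : Fin k} (ha : g i = v) (hb : whirlAll (Fs n k) g i ≠ v + 1) :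
    ∃ u, u ≠ i ∧ mixN (Fs n k) g i.val u = v + 1 := by
  have hk2 : 2 ≤ k := by have := i.pos; omega
  have h10 : (1 : Fin k) ≠ 0 := by
    intro h; have := congrArg Fin.val h
    rw [val_one_of hk2] at this
    simp only [Fin.val_zero] at this; omega
  have hba : whirlAll (Fs n k) g i ≠ g i := move_ne hnk hg i
  apply occupied hnk hg i
  · rw [ha]
    intro h
    exact h10 (add_eq_left.mp h)
  · rw [ha]
    have h1 : (v + 1 - v) = (1 : Fin k) := by abel
    rw [h1, val_one_of hk2]
    have hbv0 : whirlAll (Fs n k) g i - v ≠ 0 := by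
      rw [sub_ne_zero, ← ha]; exact hba
    have hge1 : 1 ≤ (whirlAll (Fs n k) g i - v).val :=
      Nat.pos_of_ne_zero (fun h0 => hbv0 (Fin.ext h0))
    rcases Nat.lt_or_ge 1 (whirlAll (Fs n k) g i - v).val with h | h
    · exact h
    · exfalso
      have hv1 : (whirlAll (Fs n k) g i - v).val = (1 : Fin k).val := by
        rw [val_one_of hk2]; omega
      have : whirlAll (Fs n k) g i - v = 1 := Fin.ext hv1
      have : whirlAll (Fs n k) g i = v + 1 := by
        rw [← this]; abel
      exact hb this

end Keys
section InjOn
variable {n k : ℕ} [NeZero k]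

lemma whirl_inj_on (hnk : n < k) {g₁ g₂ : Fin n → Fin k} (h₁ : Function.Injective g₁)
    (h₂ : Function.Injective g₂) (i : Fin n)
    (heq : whirl (Fs n k) i g₁ = whirl (Fs n k) i g₂) : g₁ = g₂ := by
  obtain ⟨T₁, hT₁0, hT₁k, hw₁, hinj₁, hmin₁⟩ := whirl_spec hnk h₁ i
  obtain ⟨T₂, hT₂0, hT₂k, hw₂, hinj₂, hmin₂⟩ := whirl_spec hnk h₂ i
  have hne : ∀ u, u ≠ i → g₁ u = g₂ u := fun u hu => by
    rw [← whirl_apply_ne (Fs n k) i g₁ hu, heq, whirl_apply_ne (Fs n k) i g₂ hu]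
  have hii : g₁ i = g₂ i := by
    by_contra hne12
    set a₁ := g₁ i with ha₁
    set a₂ := g₂ i with ha₂
    set b := whirl (Fs n k) i g₁ i with hbdef
    have hb₁ : b = a₁ + (T₁ : Fin k) := by
      rw [hbdef, hw₁, Function.update_self]
    have hb₂ : b = a₂ + (T₂ : Fin k) := by
      rw [hbdef, heq, hw₂, Function.update_self]
    have hT₁v : T₁ = (b - a₁).val := by
      rw [hb₁, add_sub_cancel_left, Fin.val_cast_of_lt hT₁k]
    have hT₂v : T₂ = (b - a₂).val := by
      rw [hb₂, add_sub_cancel_left, Fin.val_cast_of_lt hT₂k]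
    -- case: (a₂ - a₁).val < T₁ is impossible
    have hC1 : ¬ ((a₂ - a₁).val < T₁) := by
      intro hlt
      have hs0 : 0 < (a₂ - a₁).val :=
        Nat.pos_of_ne_zero (fun h0 => hne12 (sub_eq_zero.mp (Fin.ext h0)).symm)
      obtain ⟨u, hu, hgu⟩ := hmin₁ _ hs0 hlt
      rw [Fin.cast_val_eq_self, add_sub_cancel] at hgu
      exact hu (h₂ ((hne u hu).symm.trans hgu))
    have hC2 : ¬ ((a₁ - a₂).val < T₂) := by
      intro hlt
      have hs0 : 0 < (a₁ - a₂).val :=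
        Nat.pos_of_ne_zero (fun h0 => hne12 (sub_eq_zero.mp (Fin.ext h0)))
      obtain ⟨u, hu, hgu⟩ := hmin₂ _ hs0 hlt
      rw [Fin.cast_val_eq_self, add_sub_cancel] at hgu
      exact hu (h₁ ((hne u hu).trans hgu))
    have hE1 : (a₂ - a₁).val ≠ T₁ := by
      intro heqv
      have h1 : a₂ - a₁ = (T₁ : Fin k) := by
        rw [← heqv, Fin.cast_val_eq_self]
      have h2 : a₂ = b := by rw [hb₁, ← h1, add_sub_cancel]
      have h3 : (T₂ : Fin k) = 0 := add_eq_left.mp (h2.trans hb₂).symm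
      have := congrArg Fin.val h3
      rw [Fin.val_cast_of_lt hT₂k] at this
      simp only [Fin.val_zero] at this; omega
    have hE2 : (a₁ - a₂).val ≠ T₂ := by
      intro heqv
      have h1 : a₁ - a₂ = (T₂ : Fin k) := by
        rw [← heqv, Fin.cast_val_eq_self]
      have h2 : a₁ = b := by rw [hb₂, ← h1, add_sub_cancel]
      have h3 : (T₁ : Fin k) = 0 := add_eq_left.mp (h2.trans hb₁).symm
      have := congrArg Fin.val h3
      rw [Fin.val_cast_of_lt hT₁k] at this
      simp only [Fin.val_zero] at this; omega
    have hpq : a₁.val ≠ a₂.val := fun h => hne12 (Fin.ext h)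
    have h1 := sub_val_cases a₂ a₁
    have h2 := sub_val_cases a₁ a₂
    have h3 := sub_val_cases b a₁
    have h4 := sub_val_cases b a₂
    have hp := a₁.isLt; have hq := a₂.isLt; have hr := b.isLt
    rw [← hT₁v] at h3
    rw [← hT₂v] at h4
    rw [h1] at hC1 hE1
    rw [h2] at hC2 hE2
    split_ifs at hC1 hC2 hE1 hE2 h3 h4 <;> omega
  funext u
  rcases eq_or_ne u i with h | hu
  · rw [h]; exact hii
  · exact hne u hu

lemma whirlAll_inj_on (hnk : n < k) {g₁ g₂ : Fin n → Fin k} (h₁ : Function.Injective g₁)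
    (h₂ : Function.Injective g₂)
    (heq : whirlAll (Fs n k) g₁ = whirlAll (Fs n k) g₂) : g₁ = g₂ := by
  have main : ∀ (l : List (Fin n)) (g₁ g₂ : Fin n → Fin k), Function.Injective g₁ →
      Function.Injective g₂ →
      l.foldl (fun g i => whirl (Fs n k) i g) g₁ = l.foldl (fun g i => whirl (Fs n k) i g) g₂ →
      g₁ = g₂ := by
    intro l
    induction l with
    | nil => intro g₁ g₂ _ _ h; exact h
    | cons a l ih =>
      intro g₁ g₂ h₁ h₂ h
      exact whirl_inj_on hnk h₁ h₂ a
        (ih _ _ (whirl_mem (F := Fs n k) (h₁ : g₁ ∈ Fs n k) a) (whirl_mem (F := Fs n k) (h₂ : g₂ ∈ Fs n k) a) h)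
  exact main _ _ _ h₁ h₂ heq

lemma iterate_inj (hnk : n < k) {g : Fin n → Fin k} (hg : Function.Injective g) (m : ℕ) :
    Function.Injective ((whirlAll (Fs n k))^[m] g) := by
  induction m with
  | zero => exact hg
  | succ m ih =>
    rw [Function.iterate_succ_apply']
    exact whirlAll_mem (F := Fs n k) (g := (whirlAll (Fs n k))^[m] g) (ih : _ ∈ Fs n k)

lemma iterate_cancel (hnk : n < k) {g₁ g₂ : Fin n → Fin k} (h₁ : Function.Injective g₁)
    (h₂ : Function.Injective g₂) (s : ℕ)
    (heq : (whirlAll (Fs n k))^[s] g₁ = (whirlAll (Fs n k))^[s] g₂) : g₁ = g₂ := by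
  induction s with
  | zero => exact heq
  | succ s ih =>
    rw [Function.iterate_succ_apply', Function.iterate_succ_apply'] at heq
    exact ih (whirlAll_inj_on hnk (iterate_inj hnk h₁ s) (iterate_inj hnk h₂ s) heq)

lemma mem_periodic (hnk : n < k) {g : Fin n → Fin k} (hg : Function.Injective g) :
    g ∈ Function.periodicPts (whirlAll (Fs n k)) := by
  have : ∃ m₁ m₂ : ℕ, m₁ ≠ m₂ ∧ (whirlAll (Fs n k))^[m₁] g = (whirlAll (Fs n k))^[m₂] g := by
    obtain ⟨m₁, m₂, hne, he⟩ :=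
      Finite.exists_ne_map_eq_of_infinite (fun m : ℕ => (whirlAll (Fs n k))^[m] g)
    exact ⟨m₁, m₂, hne, he⟩
  obtain ⟨m₁, m₂, hne, he⟩ := this
  rcases Nat.lt_or_ge m₁ m₂ with h | h
  · refine ⟨m₂ - m₁, by omega, ?_⟩
    have : (whirlAll (Fs n k))^[m₁] ((whirlAll (Fs n k))^[m₂ - m₁] g)
        = (whirlAll (Fs n k))^[m₁] g := by
      rw [← Function.iterate_add_apply]
      rw [show m₁ + (m₂ - m₁) = m₂ from by omega]
      exact he.symm
    exact iterate_cancel hnk (iterate_inj hnk hg _) hg m₁ this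
  · have hlt : m₂ < m₁ := by omega
    refine ⟨m₁ - m₂, by omega, ?_⟩
    have : (whirlAll (Fs n k))^[m₂] ((whirlAll (Fs n k))^[m₁ - m₂] g)
        = (whirlAll (Fs n k))^[m₂] g := by
      rw [← Function.iterate_add_apply]
      rw [show m₂ + (m₁ - m₂) = m₁ from by omega]
      exact he
    exact iterate_cancel hnk (iterate_inj hnk hg _) hg m₂ this

end InjOn
section Orbit
variable {n k : ℕ} [NeZero k] {L : ℕ} [NeZero L]

lemma iterate_period {α : Type*} {w : α → α} {f : α} {M : ℕ} (hper : w^[M] f = f) :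
    ∀ q, w^[M * q] f = f := by
  intro q
  induction q with
  | zero => rfl
  | succ q ih => rw [Nat.mul_succ, Function.iterate_add_apply, hper, ih]

lemma iterate_mod {α : Type*} {w : α → α} {f : α} {M : ℕ} (hM : 0 < M)
    (hper : w^[M] f = f) (t : ℕ) : w^[t] f = w^[t % M] f := by
  conv_lhs => rw [(Nat.mod_add_div t M).symm,
    Function.iterate_add_apply, iterate_period hper]

noncomputable def Fm {n k : ℕ} [NeZero k] (L : ℕ) [NeZero L] (f : Fin n → Fin k)
    (m : ZMod L) : Fin n → Fin k :=
  (whirlAll (Fs n k))^[m.val] f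

lemma Fm_add_one {f : Fin n → Fin k} (hper : (whirlAll (Fs n k))^[L] f = f) (m : ZMod L) :
    Fm L f (m + 1) = whirlAll (Fs n k) (Fm L f m) := by
  have hL : 0 < L := Nat.pos_of_ne_zero (NeZero.ne L)
  have h1 : (m + 1 : ZMod L).val = (m.val + 1) % L := by
    rw [ZMod.val_add, ZMod.val_one_eq_one_mod]
    conv_rhs => rw [Nat.add_mod]
    rw [Nat.mod_eq_of_lt (ZMod.val_lt m)]
  rw [Fm, Fm, h1, ← iterate_mod hL hper, Function.iterate_succ_apply']

noncomputable def witness {n k : ℕ} [NeZero k] (g : Fin n → Fin k) (i : Fin n) (c : Fin k) :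
    Fin n :=
  if h : ∃ u, u ≠ i ∧ mixN (Fs n k) g i.val u = c then h.choose else i

lemma witness_spec {g : Fin n → Fin k} {i : Fin n} {c : Fin k}
    (h : ∃ u, u ≠ i ∧ mixN (Fs n k) g i.val u = c) :
    witness g i c ≠ i ∧ mixN (Fs n k) g i.val (witness g i c) = c := by
  rw [witness, dif_pos h]; exact h.choose_spec

lemma witness_eq {g : Fin n → Fin k} (hg : Function.Injective g) {i u : Fin n} {c : Fin k}
    (hu : u ≠ i) (hc : mixN (Fs n k) g i.val u = c) : witness g i c = u := by
  have h : ∃ u, u ≠ i ∧ mixN (Fs n k) g i.val u = c := ⟨u, hu, hc⟩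
  have hs := witness_spec h
  exact mixN_inj hg (le_of_lt i.isLt) (hs.2.trans hc.symm)

end Orbit
section Bij
variable {n k : ℕ} [NeZero k] {L : ℕ} [NeZero L]

lemma QP_card (hnk : n < k) {f : Fin n → Fin k} (hf : Function.Injective f)
    (hper : (whirlAll (Fs n k))^[L] f = f) (v : Fin k) :
    (Finset.univ.filter fun x : ZMod L × Fin n =>
        Fm L f (x.1 + 1) x.2 = v + 1 ∧ Fm L f x.1 x.2 ≠ v).card
      = (Finset.univ.filter fun x : ZMod L × Fin n =>
        Fm L f x.1 x.2 = v ∧ Fm L f (x.1 + 1) x.2 ≠ v + 1).card := by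
  have hinj : ∀ m : ZMod L, Function.Injective (Fm L f m) :=
    fun m => iterate_inj hnk hf m.val
  have hstep : ∀ m : ZMod L, Fm L f (m + 1) = whirlAll (Fs n k) (Fm L f m) :=
    Fm_add_one hper
  refine Finset.card_bij'
    (fun y _ => if witness (Fm L f y.1) y.2 v < y.2
      then (y.1 + 1, witness (Fm L f y.1) y.2 v) else (y.1, witness (Fm L f y.1) y.2 v))
    (fun y _ => if witness (Fm L f y.1) y.2 (v + 1) < y.2
      then (y.1, witness (Fm L f y.1) y.2 (v + 1))
      else (y.1 - 1, witness (Fm L f y.1) y.2 (v + 1)))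
    ?_ ?_ ?_ ?_
  -- membership forward
  · intro x hx
    obtain ⟨-, hb, ha⟩ := Finset.mem_filter.mp hx
    have hbw : whirlAll (Fs n k) (Fm L f x.1) x.2 = v + 1 := by
      rw [← hstep]; exact hb
    have hex := key_Q hnk (hinj x.1) x.2 hbw ha
    have hw := witness_spec hex
    set u := witness (Fm L f x.1) x.2 v with hudef
    by_cases hcase : u < x.2
    · rw [if_pos hcase]
      refine Finset.mem_filter.mpr ⟨Finset.mem_univ _, ?_, ?_⟩
      · have h2 := hw.2
        rw [mixN_lt (Fin.lt_def.mp hcase)] at h2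
        rw [hstep]; exact h2
      · intro hcontra
        have e1 : mixN (Fs n k) (Fm L f (x.1+1)) (u.val+1) u = v + 1 := by
          rw [mixN_lt (Nat.lt_succ_self _), ← hstep]; exact hcontra
        have e2 : mixN (Fs n k) (Fm L f (x.1+1)) (u.val+1) x.2 = v + 1 := by
          rw [mixN_ge (Fin.lt_def.mp hcase)]; exact hb
        exact hw.1 (mixN_inj (hinj (x.1+1)) u.isLt (e1.trans e2.symm))
    · rw [if_neg hcase]
      have hux : x.2.val ≤ u.val := by
        have h1 : u.val ≠ x.2.val := fun h => hw.1 (Fin.ext h)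
        have h2 : ¬ (u.val < x.2.val) := fun h => hcase (Fin.lt_def.mpr h)
        omega
      refine Finset.mem_filter.mpr ⟨Finset.mem_univ _, ?_, ?_⟩
      · have h2 := hw.2
        rw [mixN_ge hux] at h2
        exact h2
      · intro hcontra
        exact hw.1 (hinj (x.1+1) (hcontra.trans hb.symm))
  -- membership backward
  · intro x hx
    obtain ⟨-, ha, hb⟩ := Finset.mem_filter.mp hx
    have hbw : whirlAll (Fs n k) (Fm L f x.1) x.2 ≠ v + 1 := by
      rw [← hstep]; exact hb
    have hex := key_P hnk (hinj x.1) x.2 ha hbw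
    have hw := witness_spec hex
    set u := witness (Fm L f x.1) x.2 (v + 1) with hudef
    by_cases hcase : u < x.2
    · rw [if_pos hcase]
      refine Finset.mem_filter.mpr ⟨Finset.mem_univ _, ?_, ?_⟩
      · have h2 := hw.2
        rw [mixN_lt (Fin.lt_def.mp hcase)] at h2
        rw [hstep]; exact h2
      · intro hcontra
        exact hw.1 (hinj x.1 (hcontra.trans ha.symm))
    · rw [if_neg hcase]
      have hux : x.2.val ≤ u.val := by
        have h1 : u.val ≠ x.2.val := fun h => hw.1 (Fin.ext h)
        have h2 : ¬ (u.val < x.2.val) := fun h => hcase (Fin.lt_def.mpr h)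
        omega
      refine Finset.mem_filter.mpr ⟨Finset.mem_univ _, ?_, ?_⟩
      · rw [sub_add_cancel]
        have h2 := hw.2
        rw [mixN_ge hux] at h2
        exact h2
      · intro hcontra
        have hstep' : Fm L f x.1 = whirlAll (Fs n k) (Fm L f (x.1 - 1)) := by
          rw [← hstep (x.1 - 1), sub_add_cancel]
        have e1 : mixN (Fs n k) (Fm L f (x.1-1)) (x.2.val+1) x.2 = v := by
          rw [mixN_lt (Nat.lt_succ_self _), ← hstep']; exact ha
        have e2 : mixN (Fs n k) (Fm L f (x.1-1)) (x.2.val+1) u = v := by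
          rw [mixN_ge (by omega : x.2.val + 1 ≤ u.val)]
          exact hcontra
        exact hw.1 (mixN_inj (hinj (x.1-1)) x.2.isLt (e2.trans e1.symm))
  -- left inverse
  · intro x hx
    obtain ⟨-, hb, ha⟩ := Finset.mem_filter.mp hx
    have hbw : whirlAll (Fs n k) (Fm L f x.1) x.2 = v + 1 := by
      rw [← hstep]; exact hb
    have hex := key_Q hnk (hinj x.1) x.2 hbw ha
    have hw := witness_spec hex
    set u := witness (Fm L f x.1) x.2 v with hudef
    by_cases hcase : u < x.2
    · rw [if_pos hcase]
      have hwit : witness (Fm L f (x.1 + 1)) u (v + 1) = x.2 := by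
        apply witness_eq (hinj (x.1+1)) (Ne.symm hw.1)
        rw [mixN_ge (le_of_lt (Fin.lt_def.mp hcase))]
        exact hb
      dsimp only
      rw [hwit, if_neg (by
        intro hcon
        exact absurd (lt_trans hcon hcase) (lt_irrefl _))]
      rw [add_sub_cancel_right]
    · rw [if_neg hcase]
      have hux : x.2 < u := by
        have h1 : u.val ≠ x.2.val := fun h => hw.1 (Fin.ext h)
        have h2 : ¬ (u.val < x.2.val) := fun h => hcase (Fin.lt_def.mpr h)
        exact Fin.lt_def.mpr (by omega)
      have hwit : witness (Fm L f x.1) u (v + 1) = x.2 := by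
        apply witness_eq (hinj x.1) (Ne.symm hw.1)
        rw [mixN_lt (Fin.lt_def.mp hux), ← hstep]
        exact hb
      dsimp only
      rw [hwit, if_pos hux]
  -- right inverse
  · intro x hx
    obtain ⟨-, ha, hb⟩ := Finset.mem_filter.mp hx
    have hbw : whirlAll (Fs n k) (Fm L f x.1) x.2 ≠ v + 1 := by
      rw [← hstep]; exact hb
    have hex := key_P hnk (hinj x.1) x.2 ha hbw
    have hw := witness_spec hex
    set u := witness (Fm L f x.1) x.2 (v + 1) with hudef
    by_cases hcase : u < x.2
    · rw [if_pos hcase]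
      have hwit : witness (Fm L f x.1) u v = x.2 := by
        apply witness_eq (hinj x.1) (Ne.symm hw.1)
        rw [mixN_ge (le_of_lt (Fin.lt_def.mp hcase))]
        exact ha
      dsimp only
      rw [hwit, if_neg (by
        intro hcon
        exact absurd (lt_trans hcon hcase) (lt_irrefl _))]
    · rw [if_neg hcase]
      have hux : x.2 < u := by
        have h1 : u.val ≠ x.2.val := fun h => hw.1 (Fin.ext h)
        have h2 : ¬ (u.val < x.2.val) := fun h => hcase (Fin.lt_def.mpr h)
        exact Fin.lt_def.mpr (by omega)
      have hstep' : Fm L f x.1 = whirlAll (Fs n k) (Fm L f (x.1 - 1)) := by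
        rw [← hstep (x.1 - 1), sub_add_cancel]
      have hwit : witness (Fm L f (x.1 - 1)) u v = x.2 := by
        apply witness_eq (hinj (x.1 - 1)) (Ne.symm hw.1)
        rw [mixN_lt (Fin.lt_def.mp hux), ← hstep']
        exact ha
      dsimp only
      rw [hwit, if_pos hux, sub_add_cancel]

end Bij
section Count
variable {n k : ℕ} [NeZero k] {L : ℕ} [NeZero L]

noncomputable def Scount {n k : ℕ} [NeZero k] (L : ℕ) [NeZero L] (f : Fin n → Fin k)
    (v : Fin k) : ℕ :=
  ∑ m : ZMod L, (Finset.univ.filter fun i => Fm L f m i = v).card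

lemma sum_card_eq (P : ZMod L → Fin n → Prop) [∀ m, DecidablePred (P m)]
    [DecidablePred fun x : ZMod L × Fin n => P x.1 x.2] :
    (∑ m : ZMod L, (Finset.univ.filter fun i => P m i).card)
      = (Finset.univ.filter fun x : ZMod L × Fin n => P x.1 x.2).card := by
  simp only [Finset.card_filter]
  refine Eq.trans ?_ (Fintype.sum_prod_type
    (f := fun x : ZMod L × Fin n => if P x.1 x.2 then (1:ℕ) else 0)).symm
  congr!

lemma Scount_succ (hnk : n < k) {f : Fin n → Fin k} (hf : Function.Injective f)
    (hper : (whirlAll (Fs n k))^[L] f = f) (v : Fin k) :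
    Scount L f (v + 1) = Scount L f v := by
  have hQP := QP_card hnk hf hper v
  simp only [ne_eq] at hQP
  have hA : Scount L f (v+1)
      = (Finset.univ.filter fun x : ZMod L × Fin n => Fm L f (x.1+1) x.2 = v + 1).card := by
    rw [Scount, ← Equiv.sum_comp (Equiv.addRight (1 : ZMod L))
      (fun m => (Finset.univ.filter fun i => Fm L f m i = v + 1).card)]
    simp only [Equiv.coe_addRight]
    exact sum_card_eq fun m i => Fm L f (m+1) i = v + 1
  have hB : Scount L f v
      = (Finset.univ.filter fun x : ZMod L × Fin n => Fm L f x.1 x.2 = v).card :=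
    sum_card_eq _
  have splitA := Finset.card_filter_add_card_filter_not
    (s := Finset.univ.filter fun x : ZMod L × Fin n => Fm L f (x.1+1) x.2 = v + 1)
    (p := fun x => Fm L f x.1 x.2 = v)
  have splitB := Finset.card_filter_add_card_filter_not
    (s := Finset.univ.filter fun x : ZMod L × Fin n => Fm L f x.1 x.2 = v)
    (p := fun x => Fm L f (x.1+1) x.2 = v + 1)
  rw [Finset.filter_filter, Finset.filter_filter] at splitA splitB
  have hR : (Finset.univ.filter fun x : ZMod L × Fin n =>
        Fm L f (x.1+1) x.2 = v + 1 ∧ Fm L f x.1 x.2 = v).card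
      = (Finset.univ.filter fun x : ZMod L × Fin n =>
        Fm L f x.1 x.2 = v ∧ Fm L f (x.1+1) x.2 = v + 1).card := by
    congr 1
    apply Finset.filter_congr
    intro x _
    constructor
    · exact fun h => ⟨h.2, h.1⟩
    · exact fun h => ⟨h.2, h.1⟩
  rw [hA, hB]
  omega

lemma Scount_const (hnk : n < k) {f : Fin n → Fin k} (hf : Function.Injective f)
    (hper : (whirlAll (Fs n k))^[L] f = f) (v : Fin k) :
    Scount L f v = Scount L f 0 := by
  have hnat : ∀ c : ℕ, Scount L f (c : Fin k) = Scount L f 0 := by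
    intro c
    induction c with
    | zero => norm_num
    | succ c ih =>
      have : ((c + 1 : ℕ) : Fin k) = (c : Fin k) + 1 := by push_cast; ring
      rw [this, Scount_succ hnk hf hper, ih]
  have := hnat v.val
  rwa [Fin.cast_val_eq_self] at this

lemma Scount_total (f : Fin n → Fin k) : ∑ v : Fin k, Scount L f v = L * n := by
  simp only [Scount]
  rw [Finset.sum_comm]
  have h1 : ∀ m : ZMod L, ∑ v : Fin k, (Finset.univ.filter fun i => Fm L f m i = v).card
      = n := by
    intro m
    rw [← Finset.card_eq_sum_card_fiberwise (fun x _ => Finset.mem_univ (Fm L f m x))]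
    simp
  simp only [h1]
  rw [Finset.sum_const, Finset.card_univ, ZMod.card, smul_eq_mul]

end Count
section Final
variable {n k : ℕ} [NeZero k]

lemma Fm_injective (hnk : n < k) {f : Fin n → Fin k} (hf : Function.Injective f)
    {L : ℕ} [NeZero L] (hLmin : L = Function.minimalPeriod (whirlAll (Fs n k)) f) :
    Function.Injective (fun m : ZMod L => Fm L f m) := by
  have key : ∀ a b : ℕ, a < b → b < L →
      (whirlAll (Fs n k))^[a] f = (whirlAll (Fs n k))^[b] f → False := by
    intro a b hab hbL he
    have hc : (whirlAll (Fs n k))^[a] ((whirlAll (Fs n k))^[b - a] f)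
        = (whirlAll (Fs n k))^[a] f := by
      rw [← Function.iterate_add_apply, show a + (b - a) = b from by omega]
      exact he.symm
    have hpp : (whirlAll (Fs n k))^[b - a] f = f :=
      iterate_cancel hnk (iterate_inj hnk hf _) hf _ hc
    have hle : Function.minimalPeriod (whirlAll (Fs n k)) f ≤ b - a :=
      Function.IsPeriodicPt.minimalPeriod_le (by omega) hpp
    omega
  intro m₁ m₂ he
  simp only [Fm] at he
  rcases Nat.lt_trichotomy m₁.val m₂.val with h | h | h
  · exact absurd he (fun hh => key _ _ h (ZMod.val_lt m₂) hh)
  · exact ZMod.val_injective L h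
  · exact absurd he.symm (fun hh => key _ _ h (ZMod.val_lt m₁) hh)

lemma whirl_id_of_eq (hnk : n = k) {g : Fin n → Fin k} (hg : Function.Injective g)
    (i : Fin n) : whirl (Fs n k) i g = g := by
  have hbij : Function.Bijective g :=
    (Fintype.bijective_iff_injective_and_card g).mpr ⟨hg, by simp [hnk]⟩
  rw [whirl]
  split
  · next h =>
    have hfind : Function.update g i (g i + ((Nat.find h : ℕ) : Fin k)) ∈ Fs n k :=
      (Nat.find_spec h).2
    by_cases h0 : ((Nat.find h : ℕ) : Fin k) = 0
    · rw [h0, add_zero, Function.update_eq_self]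
    · exfalso
      have hbne : g i + ((Nat.find h : ℕ) : Fin k) ≠ g i := by
        intro hc; exact h0 (add_eq_left.mp hc)
      obtain ⟨u, hu⟩ := hbij.2 (g i + ((Nat.find h : ℕ) : Fin k))
      have hune : u ≠ i := fun hui => hbne (by rw [← hu, hui])
      have hni : ¬ Function.Injective
          (Function.update g i (g i + ((Nat.find h : ℕ) : Fin k))) := by
        rw [update_inj_iff hg]
        push_neg
        exact ⟨u, hune, hu⟩
      exact hni hfind
  · rfl

lemma whirlAll_id_of_eq (hnk : n = k) {g : Fin n → Fin k} (hg : Function.Injective g) :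
    whirlAll (Fs n k) g = g := by
  rw [whirlAll]
  have hl : ∀ l : List (Fin n), List.foldl (fun g i => whirl (Fs n k) i g) g l = g := by
    intro l
    induction l with
    | nil => rfl
    | cons a l ih => rw [List.foldl_cons, whirl_id_of_eq hnk hg a, ih]
  exact hl _

end Final

theorem stmt1 {n k : ℕ} [NeZero k] (hnk : n ≤ k)
    (f : Fin n → Fin k) (hf : Function.Injective f) (j : Fin k) :
    (∑ g ∈ orbitOf (whirlAll {h : Fin n → Fin k | Function.Injective h}) f,
        ((Finset.univ.filter fun i => g i = j).card : ℚ)) /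
      ((orbitOf (whirlAll {h : Fin n → Fin k | Function.Injective h}) f).card : ℚ)
      = (n : ℚ) / k := by
  have hFs : {h : Fin n → Fin k | Function.Injective h} = Fs n k := rfl
  rw [hFs]
  have hk0 : (k : ℚ) ≠ 0 := Nat.cast_ne_zero.mpr (NeZero.ne k)
  rcases Nat.lt_or_ge n k with hlt | hge
  · -- n < k
    set w := whirlAll (Fs n k) with hw
    have hper0 : f ∈ Function.periodicPts w := mem_periodic hlt hf
    set L := Function.minimalPeriod w f with hLdef
    have hL : 0 < L := Function.minimalPeriod_pos_of_mem_periodicPts hper0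
    haveI : NeZero L := ⟨hL.ne'⟩
    have hper : w^[L] f = f := Function.iterate_minimalPeriod
    have hFminj : Function.Injective (fun m : ZMod L => Fm L f m) :=
      Fm_injective hlt hf hLdef
    have horb : orbitOf w f = Finset.image (fun m : ZMod L => Fm L f m) Finset.univ := by
      ext g
      simp only [orbitOf, Finset.mem_filter, Finset.mem_univ, true_and, Finset.mem_image]
      constructor
      · rintro ⟨m, rfl⟩
        refine ⟨(m : ZMod L), ?_⟩
        simp only [Fm, ZMod.val_natCast]
        exact (iterate_mod hL hper m).symm
      · rintro ⟨m, rfl⟩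
        exact ⟨m.val, rfl⟩
    rw [horb, Finset.sum_image (fun m₁ _ m₂ _ he => hFminj he),
      Finset.card_image_of_injective _ hFminj, Finset.card_univ, ZMod.card]
    -- now: (∑ m : ZMod L, (card ... : ℚ)) / L = n / k
    have hsum : (∑ m : ZMod L, ((Finset.univ.filter fun i => Fm L f m i = j).card : ℚ))
        = ((Scount L f j : ℕ) : ℚ) := by
      rw [Scount]
      push_cast
      rfl
    rw [hsum]
    have htot := Scount_total (L := L) (k := k) f
    have hconst : ∀ v : Fin k, Scount L f v = Scount L f 0 :=
      fun v => Scount_const hlt hf hper v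
    have hkS : k * Scount L f 0 = L * n := by
      rw [← htot, Finset.sum_congr rfl (fun v _ => hconst v), Finset.sum_const,
        Finset.card_univ, Fintype.card_fin, smul_eq_mul]
    have hkj : k * Scount L f j = L * n := by rw [hconst j]; exact hkS
    have hL0 : (L : ℚ) ≠ 0 := Nat.cast_ne_zero.mpr hL.ne'
    rw [div_eq_div_iff hL0 hk0]
    have : ((k : ℚ)) * (Scount L f j : ℕ) = (L : ℚ) * n := by exact_mod_cast hkj
    linarith
  · -- n = k
    have heq : n = k := le_antisymm hnk hge
    have hbij : Function.Bijective f :=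
      (Fintype.bijective_iff_injective_and_card f).mpr ⟨hf, by simp [heq]⟩
    have hWf : whirlAll (Fs n k) f = f := whirlAll_id_of_eq heq hf
    have horb : orbitOf (whirlAll (Fs n k)) f = {f} := by
      ext g
      simp only [orbitOf, Finset.mem_filter, Finset.mem_univ, true_and,
        Finset.mem_singleton]
      constructor
      · rintro ⟨m, rfl⟩
        exact (Function.iterate_fixed hWf m)
      · rintro rfl
        exact ⟨0, rfl⟩
    rw [horb, Finset.sum_singleton, Finset.card_singleton]
    have hone : (Finset.univ.filter fun i => f i = j).card = 1 := by
      rw [Finset.card_eq_one]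
      obtain ⟨u, hu⟩ := hbij.2 j
      refine ⟨u, ?_⟩
      ext x
      simp only [Finset.mem_filter, Finset.mem_univ, true_and, Finset.mem_singleton]
      constructor
      · intro hx
        exact hbij.1 (hx.trans hu.symm)
      · rintro rfl
        exact hu
    rw [hone, heq]
    norm_num
end

section
/- Let f ∈ Park(n) be a parking function and i ∈ [n]. Then whirling at index i satisfies: (w_i(f))(i) = f(i)+1 if #f⁻¹([f(i)]) > f(i), and (w_i(f))(i) = 1 if #f⁻¹([f(i)]) = f(i). -/
open Finset

open scoped Classical

open Fin.NatCast

/-- Parking functions: for each i, at least i+1 inputs have value ≤ i (0-indexed version of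
\#f⁻¹([i]) ≥ i for all i ∈ [n]). -/
def Park (n : ℕ) : Set (Fin n → Fin n) :=
  {f | ∀ i : Fin n, i.val + 1 ≤ (Finset.univ.filter fun j => f j ≤ i).card}

theorem stmt9 {n : ℕ} [NeZero n] (f : Fin n → Fin n) (hf : f ∈ Park n) (i : Fin n) :
    ((f i).val + 1 < (Finset.univ.filter fun j => f j ≤ f i).card →
        whirl (Park n) i f i = f i + 1) ∧
    ((Finset.univ.filter fun j => f j ≤ f i).card = (f i).val + 1 →
        whirl (Park n) i f i = 0) := by
  have hn : 0 < n := Nat.pos_of_neZero n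
  have hvlt : (f i).val < n := (f i).isLt
  have keyEq : ∀ (c : Fin n) (i' : Fin n), (c ≤ i' ↔ f i ≤ i') →
      (univ.filter fun j => Function.update f i c j ≤ i')
        = (univ.filter fun j => f j ≤ i') := by
    intro c i' hiff
    ext j
    by_cases hj : j = i
    · subst hj; simp [Function.update_self, hiff]
    · simp [Function.update_of_ne hj]
  have keyErase : ∀ (c : Fin n) (i' : Fin n), ¬ c ≤ i' → f i ≤ i' →
      (univ.filter fun j => Function.update f i c j ≤ i')
        = (univ.filter fun j => f j ≤ i').erase i := by
    intro c i' h1 h2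
    ext j
    by_cases hj : j = i
    · subst hj; simp [Function.update_self, h1]
    · simp [Function.update_of_ne hj, hj]
  constructor
  · intro hlt
    have hcardle : (univ.filter fun j => f j ≤ f i).card ≤ n := by
      simpa using card_filter_le (univ : Finset (Fin n)) (fun j => f j ≤ f i)
    have hv1 : (f i).val + 1 < n := by omega
    have hone : (1 : Fin n).val = 1 := by
      rw [Fin.val_one', Nat.mod_eq_of_lt (by omega : 1 < n)]
    have hc1 : (f i + 1).val = (f i).val + 1 := by
      rw [Fin.val_add, hone, Nat.mod_eq_of_lt hv1]
    have hmem : Function.update f i (f i + 1) ∈ Park n := by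
      intro i'
      by_cases h1 : f i + 1 ≤ i'
      · rw [keyEq _ _ (iff_of_true h1 (le_trans (by rw [Fin.le_def, hc1]; omega) h1))]
        exact hf i'
      · by_cases h2 : f i ≤ i'
        · have hii' : i' = f i := by
            rw [Fin.le_def, hc1] at h1
            rw [Fin.le_def] at h2
            rw [Fin.ext_iff]; omega
          rw [keyErase _ _ h1 h2, card_erase_of_mem (by simp [h2])]
          subst hii'
          omega
        · rw [keyEq _ _ (iff_of_false h1 h2)]; exact hf i'
    have hex : ∃ t : ℕ, 0 < t ∧ Function.update f i (f i + (t : Fin n)) ∈ Park n :=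
      ⟨1, one_pos, by simpa using hmem⟩
    have hfind : Nat.find hex = 1 := by
      have ha : Nat.find hex ≤ 1 := Nat.find_le ⟨one_pos, by simpa using hmem⟩
      have hb : 0 < Nat.find hex := (Nat.find_spec hex).1
      omega
    unfold whirl
    rw [dif_pos hex, hfind]
    simp
  · intro heq
    have hmem0 : Function.update f i 0 ∈ Park n := by
      intro i'
      refine le_trans (hf i') (card_le_card ?_)
      intro j hj
      simp only [mem_filter, mem_univ, true_and] at hj ⊢
      by_cases hjeq : j = i
      · subst hjeq; simp [Function.update_self, Fin.zero_le]
      · rwa [Function.update_of_ne hjeq]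
    have hzero : f i + ((n - (f i).val : ℕ) : Fin n) = 0 := by
      apply Fin.ext
      rw [Fin.val_add, Fin.val_natCast, Fin.val_zero]
      rcases Nat.eq_zero_or_pos (f i).val with h0 | h0
      · rw [h0]; simp
      · rw [Nat.mod_eq_of_lt (by omega : n - (f i).val < n)]
        have h : (f i).val + (n - (f i).val) = n := by omega
        rw [h, Nat.mod_self]
    have hexB : ∃ t : ℕ, 0 < t ∧ Function.update f i (f i + (t : Fin n)) ∈ Park n :=
      ⟨n - (f i).val, by omega, by rw [hzero]; exact hmem0⟩
    have hnotmem : ∀ m : ℕ, 0 < m → m < n - (f i).val →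
        Function.update f i (f i + (m : Fin n)) ∉ Park n := by
      intro m hm hmlt hPark
      have hcval : (f i + (m : Fin n)).val = (f i).val + m := by
        rw [Fin.val_add, Fin.val_natCast, Nat.mod_eq_of_lt (by omega : m < n),
          Nat.mod_eq_of_lt (by omega)]
      have h1 : ¬ (f i + (m : Fin n)) ≤ f i := by
        rw [Fin.le_def, hcval]; omega
      have hPi := hPark (f i)
      rw [keyErase _ _ h1 (le_refl _), card_erase_of_mem (by simp)] at hPi
      omega
    have hfind : Nat.find hexB = n - (f i).val := by
      have ha : Nat.find hexB ≤ n - (f i).val :=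
        Nat.find_le ⟨by omega, by rw [hzero]; exact hmem0⟩
      have hb := Nat.find_spec hexB
      by_contra hne
      exact hnotmem _ hb.1 (by omega) hb.2
    unfold whirl
    rw [dif_pos hexB, hfind]
    simp [hzero]
end
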